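/- Let M(𝒜,ℬ) be a principal group of directed automorphisms of a spherically homogeneous rooted tree T_m̄ with bounded valencies m̄ = (m_i), m_i ≥ 2, m_* = max_i m_i. Let 𝒢_n be the Schreier graph of the action of M(𝒜,ℬ) on the level-n vertices with generating set 𝒜 ∪ ℬ, i.e. the graph on the level-n vertices with conductances c(u,v) = #{s ∈ 𝒜 ∪ ℬ : u·s = v} for u ≠ v. Let r_n = 0⋯0 denote the all-zero level-n vertex (the root of 𝒢_n). Then there exists a constant c > 0, independent of n, such that for every n ≥ 1 and every x ∈ X_{m_n}∖{0}: Res_{𝒢_n}(r_n, x0⋯0) ≥ c·∏_{i=1}^n m_i/(m_i − 1) ≥ c·(m_*/(m_* − 1))^n, where x0⋯0 is a level-n word with the single non-zero letter x in the leading position. -/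

import Mathlib

open scoped ENNReal
namespace Paper
abbrev Vertex (m : ℕ → ℕ) (n : ℕ) := (i : Fin n) → Fin (m i)
variable {m : ℕ → ℕ}
def restr {n : ℕ} (w : Vertex m (n + 1)) : Vertex m n := fun i => w i.castSucc
def restrLe {n N : ℕ} (h : n ≤ N) (w : Vertex m N) : Vertex m n :=
  fun i => w ⟨i, lt_of_lt_of_le i.2 h⟩
def AutT (m : ℕ → ℕ) : Subgroup (∀ n, Equiv.Perm (Vertex m n)) where
  carrier := {g | ∀ (n : ℕ) (w : Vertex m (n + 1)), restr (g (n + 1) w) = g n (restr w)}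
  one_mem' := by intro n w; rfl
  mul_mem' := by
    intro a b ha hb n w
    show restr ((a (n+1)) ((b (n+1)) w)) = (a n) ((b n) (restr w))
    rw [ha, hb]
  inv_mem' := by
    intro a ha n w
    show restr ((a (n+1))⁻¹ w) = (a n)⁻¹ (restr w)
    apply (a n).injective
    have h1 := ha n ((a (n+1))⁻¹ w)
    have e1 : (a (n+1)) ((a (n+1))⁻¹ w) = w := (a (n+1)).apply_symm_apply w
    have e2 : (a n) ((a n)⁻¹ (restr w)) = restr w := (a n).apply_symm_apply _
    simp only [e1] at h1
    rw [← h1, e2]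
def app {n : ℕ} (g : AutT m) (v : Vertex m n) : Vertex m n := g.val n v
theorem restrLe_app (g : AutT m) : ∀ {N n : ℕ} (h : n ≤ N) (w : Vertex m N),
    restrLe h (g.val N w) = g.val n (restrLe h w) := by
  intro N
  induction N with
  | zero =>
    intro n h w
    have hn : n = 0 := Nat.le_zero.mp h
    subst hn; rfl
  | succ N ih =>
    intro n h w
    rcases Nat.eq_or_lt_of_le h with rfl | h'
    · rfl
    · have hN : n ≤ N := Nat.lt_succ_iff.mp h'
      calc restrLe h (g.val (N+1) w) = restrLe hN (restr (g.val (N+1) w)) := rfl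
        _ = restrLe hN (g.val N (restr w)) := by rw [g.prop N w]
        _ = g.val n (restrLe hN (restr w)) := ih hN _
        _ = g.val n (restrLe h w) := rfl
abbrev shift (m : ℕ → ℕ) (n : ℕ) : ℕ → ℕ := fun i => m (n + i)
def vappend {n k : ℕ} (v : Vertex (shift m n) k) (w : Vertex m n) : Vertex m (n + k) :=
  fun i => if h : (i : ℕ) < n then w ⟨i, h⟩
    else Fin.cast (congrArg m (by omega : n + ((i : ℕ) - n) = (i : ℕ)))
      (v ⟨(i : ℕ) - n, by omega⟩)
def topPart {n k : ℕ} (u : Vertex m (n + k)) : Vertex (shift m n) k :=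
  fun i => u ⟨n + i, by omega⟩

theorem topPart_vappend {n k : ℕ} (v : Vertex (shift m n) k) (w : Vertex m n) :
    topPart (vappend v w) = v := by
  funext i
  simp only [topPart, vappend, Fin.val_mk]
  rw [dif_neg (by omega)]
  apply Fin.ext
  simp only [Fin.coe_cast]
  exact congrArg (fun t : Fin k => (v t).1) (Fin.ext (by simp))

theorem restrLe_vappend {n k : ℕ} (v : Vertex (shift m n) k) (w : Vertex m n) :
    restrLe (Nat.le_add_right n k) (vappend v w) = w := by
  funext i
  simp only [restrLe, vappend, Fin.val_mk]
  rw [dif_pos i.2]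

theorem vappend_topPart {n k : ℕ} (u : Vertex m (n + k)) :
    vappend (topPart u) (restrLe (Nat.le_add_right n k) u) = u := by
  funext i
  by_cases h : (i : ℕ) < n
  · simp only [vappend, restrLe]
    rw [dif_pos h]
  · simp only [vappend, topPart, Fin.val_mk]
    rw [dif_neg h]
    apply Fin.ext
    simp only [Fin.coe_cast]
    exact congrArg (fun t : Fin (n+k) => (u t).1) (Fin.ext (by simp; omega))

theorem restr_vappend {n k : ℕ} (v : Vertex (shift m n) (k + 1)) (w : Vertex m n) :
    restr (n := n + k) (vappend (n := n) (k := k + 1) v w) = vappend (restr v) w := by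
  funext i
  by_cases h : (i : ℕ) < n
  · show vappend v w (Fin.castSucc i) = vappend (restr v) w i
    simp only [vappend]
    rw [dif_pos (show ((Fin.castSucc i : Fin (n+k+1)) : ℕ) < n from h), dif_pos h]
    rfl
  · show vappend v w (Fin.castSucc i) = vappend (restr v) w i
    simp only [vappend]
    rw [dif_neg (show ¬ ((Fin.castSucc i : Fin (n+k+1)) : ℕ) < n from h), dif_neg h]
    rfl

def secFun (g : AutT m) {n : ℕ} (w : Vertex m n) (k : ℕ)
    (v : Vertex (shift m n) k) : Vertex (shift m n) k :=
  topPart (g.val (n + k) (vappend v w))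

theorem secFun_spec (g : AutT m) {n : ℕ} (w : Vertex m n) (k : ℕ)
    (v : Vertex (shift m n) k) :
    g.val (n + k) (vappend v w) = vappend (secFun g w k v) (g.val n w) := by
  have h1 : restrLe (Nat.le_add_right n k) (g.val (n + k) (vappend v w)) = g.val n w := by
    rw [restrLe_app, restrLe_vappend]
  conv_lhs => rw [← vappend_topPart (g.val (n + k) (vappend v w))]
  rw [h1]
  rfl

theorem coe_inv_app (g : AutT m) (N : ℕ) (u : Vertex m N) :
    (g⁻¹ : AutT m).val N ((g : AutT m).val N u) = u := by
  have h : ((g⁻¹ : AutT m) : ∀ n, Equiv.Perm (Vertex m n)) = (↑g)⁻¹ := rfl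
  rw [h]
  exact Equiv.symm_apply_apply _ _

theorem secFun_left_inv (g : AutT m) {n : ℕ} (w : Vertex m n) (k : ℕ)
    (v : Vertex (shift m n) k) :
    secFun g⁻¹ (g.val n w) k (secFun g w k v) = v := by
  show topPart ((g⁻¹ : AutT m).val (n+k) (vappend (secFun g w k v) (g.val n w))) = v
  rw [← secFun_spec g w k v, coe_inv_app, topPart_vappend]

def sectionEquiv (g : AutT m) {n : ℕ} (w : Vertex m n) (k : ℕ) :
    Equiv.Perm (Vertex (shift m n) k) where
  toFun := secFun g w k
  invFun := secFun g⁻¹ (g.val n w) k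
  left_inv v := secFun_left_inv g w k v
  right_inv v := by
    have h2 : (g⁻¹ : AutT m)⁻¹ = g := inv_inv g
    have h3 : (g⁻¹ : AutT m).val n (g.val n w) = w := coe_inv_app g n w
    calc secFun g w k (secFun g⁻¹ (g.val n w) k v)
        = secFun (g⁻¹)⁻¹ ((g⁻¹ : AutT m).val n (g.val n w)) k
            (secFun g⁻¹ (g.val n w) k v) := by rw [h2, h3]
      _ = v := secFun_left_inv g⁻¹ (g.val n w) k v

theorem secFun_restr (g : AutT m) {n : ℕ} (w : Vertex m n) (k : ℕ)
    (v : Vertex (shift m n) (k + 1)) :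
    restr (secFun g w (k + 1) v) = secFun g w k (restr v) := by
  show restr (topPart (g.val (n + (k+1)) (vappend v w)))
      = topPart (g.val (n + k) (vappend (restr v) w))
  rw [← restr_vappend (n := n) (k := k) v w, ← g.prop (n + k) (vappend (n := n) (k := k + 1) v w)]
  rfl

/-- The section `g|_w` of a tree automorphism `g` at the level-`n` vertex `w`:
the unique automorphism of the shifted tree satisfying `(vw)·g = (v·g|_w)(w·g)`. -/
def sectionAut (g : AutT m) {n : ℕ} (w : Vertex m n) : AutT (shift m n) :=
  ⟨fun k => sectionEquiv g w k, fun k v => secFun_restr g w k v⟩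


/-! ### Distinguished vertices and predicates -/

/-- The level-`n` vertex `0⋯0` on the `0`-ray. -/
def rayV (hm : ∀ i, 0 < m i) (n : ℕ) : Vertex m n := fun i => ⟨0, hm i⟩

/-- The level-`(n+1)` neighbour `x0⋯0` of the `0`-ray: its only (possibly) non-zero
letter is the leading one, equal to `x`. -/
def nbrV (hm : ∀ i, 0 < m i) {n : ℕ} (x : Fin (m n)) : Vertex m (n + 1) :=
  fun i => if h : (i : ℕ) = n then Fin.cast (congrArg m h).symm x else ⟨0, hm i⟩

/-- The level-`n` vertex obtained from `w0` by prepending zeros. -/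
def padZero (hm : ∀ i, 0 < m i) {n₀ : ℕ} (w0 : Vertex m n₀) (n : ℕ) : Vertex m n :=
  fun i => if h : (i : ℕ) < n₀ then w0 ⟨i, h⟩ else ⟨0, hm i⟩

/-- The level-`(n+1)` vertex `x0⋯0w0`: the word `w0` at the bottom, the letter `x`
in the leading position, and zeros in between. -/
def padLead (hm : ∀ i, 0 < m i) {n₀ : ℕ} (w0 : Vertex m n₀) {n : ℕ} (x : Fin (m n)) :
    Vertex m (n + 1) :=
  fun i => if h : (i : ℕ) < n₀ then w0 ⟨i, h⟩
    else if h2 : (i : ℕ) = n then Fin.cast (congrArg m h2).symm x else ⟨0, hm i⟩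

/-- `w` lies on the `0`-ray. -/
def OnRay {n : ℕ} (w : Vertex m n) : Prop := ∀ i, (w i : ℕ) = 0

/-- `w` is a neighbour of the `0`-ray: its leading letter is non-zero and all other
letters are zero. -/
def IsNbr {n : ℕ} (w : Vertex m n) : Prop :=
  ∃ hn : 0 < n, (w ⟨n - 1, by omega⟩ : ℕ) ≠ 0 ∧
    ∀ i : Fin n, (i : ℕ) < n - 1 → (w i : ℕ) = 0

/-- A *rooted* automorphism: it permutes the first level and all its sections at
vertices of level `≥ 1` are trivial (i.e. it is an element of `Sym(X_{m_1})`). -/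
def IsRooted (g : AutT m) : Prop :=
  ∀ (n : ℕ) (w : Vertex m n), 0 < n → sectionAut g w = 1

/-- A *directed automorphism along the `0`-ray* (an element of `H_m̄`): it fixes the
`0`-ray, its sections away from the ray and its neighbours are trivial, and its
sections at neighbours of the ray are rooted. -/
def IsDirectedAut (g : AutT m) : Prop :=
  (∀ (n : ℕ) (w : Vertex m n), OnRay w → g.val n w = w) ∧
  (∀ (n : ℕ) (w : Vertex m n), ¬ OnRay w → ¬ IsNbr w → sectionAut g w = 1) ∧
  (∀ (n : ℕ) (w : Vertex m n), IsNbr w → IsRooted (sectionAut g w))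

/-- The group `𝒜_n` of `n`-th level sections of `𝒜` along the `0`-ray. -/
def Asub (hm : ∀ i, 0 < m i) (A : Subgroup (AutT m)) (n : ℕ) :
    Subgroup (AutT (shift m n)) :=
  Subgroup.closure {h | ∃ a ∈ A, h = sectionAut a (rayV hm n)}

/-- The group `ℬ_n` generated by the `n`-th level sections of `𝒜` at the neighbours
of the `0`-ray (trivial for `n = 0`, where there are no neighbours). -/
def Bsub (hm : ∀ i, 0 < m i) (A : Subgroup (AutT m)) : (n : ℕ) → Subgroup (AutT (shift m n))
  | 0 => ⊥
  | (k + 1) =>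
    Subgroup.closure {h | ∃ a ∈ A, ∃ x : Fin (m k), (x : ℕ) ≠ 0 ∧ h = sectionAut a (nbrV hm x)}

/-- The condition, for a word `w`, that position `i` is the position situated just
above the lowest non-zero letter of `w`. -/
def SpineCond {n : ℕ} (w : Vertex m n) (i : Fin n) : Prop :=
  ∃ p : Fin n, (w p : ℕ) ≠ 0 ∧ (∀ q : Fin n, (q : ℕ) < (p : ℕ) → (w q : ℕ) = 0) ∧
    (i : ℕ) = (p : ℕ) + 1

open Classical in
/-- The action of the spine-permutation automorphism `h_σ̄`: the letter just above
the lowest non-zero letter is permuted (by the permutation attached to its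
alphabet size); all-zero words are fixed. -/
noncomputable def spineFun (σ : ∀ j : ℕ, Equiv.Perm (Fin j)) {n : ℕ} (w : Vertex m n) :
    Vertex m n :=
  fun i => if SpineCond w i then (σ (m i)) (w i) else w i

/-! ### Probability measures, entropy, random walks -/

/-- `μ` is a probability measure (given by its density on a discrete group/set). -/
def IsProbMeas {G : Type*} (μ : G → ℝ) : Prop := (∀ g, 0 ≤ μ g) ∧ HasSum μ 1

/-- `μ` is symmetric. -/
def IsSymmMeas {G : Type*} [Group G] (μ : G → ℝ) : Prop := ∀ g, μ g⁻¹ = μ g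

/-- Convolution of two measures on a discrete group. -/
noncomputable def conv {G : Type*} [Group G] (μ ν : G → ℝ) : G → ℝ :=
  fun g => ∑' h, μ h * ν (h⁻¹ * g)

open Classical in
/-- `k`-fold convolution power `μ^{*k}` (with `μ^{*0} = δ_e`). -/
noncomputable def convPow {G : Type*} [Group G] (μ : G → ℝ) : ℕ → G → ℝ
  | 0 => fun g => if g = 1 then 1 else 0
  | (k + 1) => conv μ (convPow μ k)

/-- Shannon entropy `H(p) = -∑ p log p` of a discrete measure. -/
noncomputable def entropy {X : Type*} (p : X → ℝ) : ℝ := ∑' x, Real.negMulLog (p x)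

/-- Shannon entropy, valued in `ℝ≥0∞`. -/
noncomputable def entropyE {X : Type*} (p : X → ℝ) : ℝ≥0∞ :=
  ∑' x, ENNReal.ofReal (Real.negMulLog (p x))

/-- The Liouville property: every bounded `μ`-harmonic function is constant on the
subgroup generated by the support of `μ`. -/
def IsLiouville {G : Type*} [Group G] (μ : G → ℝ) : Prop :=
  ∀ f : G → ℝ, (∃ C, ∀ g, |f g| ≤ C) → (∀ g, f g = ∑' h, f (g * h) * μ h) →
    ∀ g ∈ Subgroup.closure (Function.support μ),
      ∀ h ∈ Subgroup.closure (Function.support μ), f g = f h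

/-- The position of the right random walk after `t` steps, as a function of the
increments `s 0, s 1, …` (the group element `s_t ⋯ s_2 s_1`; with this convention,
applying it to a point `x` performs the corresponding right walk on any space the
group acts on from the right). -/
def rwProd {G : Type*} [Group G] {k : ℕ} (s : Fin k → G) (t : ℕ) : G :=
  (((List.ofFn s).take t).reverse).prod

open Classical in
/-- The law of the pair (section/position) of the right `μ`-random walk observed at
the `j`-th visit of the trajectory `v·g_1, v·g_2, …` to the set `W`:
`visitLaw μ act v W sec j (h, u) = P(g at j-th visit has sec = h and position = u)`.
Here `act` is the (right) action used for the trajectory and `sec` the observable. -/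
noncomputable def visitLaw {G X H : Type*} [Group G] (μ : G → ℝ)
    (act : G → X → X) (v : X) (W : Set X) (sec : G → H) (j : ℕ) : H × X → ℝ :=
  fun p =>
    ∑' k : ℕ, ∑' s : Fin k → G,
      (∏ i, μ (s i)) *
        (if ((Finset.range k).filter fun t => act (rwProd s (t + 1)) v ∈ W).card = j
            ∧ act (rwProd s k) v ∈ W
            ∧ (sec (rwProd s k), act (rwProd s k) v) = p
          then 1 else 0)

/-! ### Electrical networks -/

/-- The Dirichlet energy of `f` with respect to the symmetric conductances `c`. -/
noncomputable def dirichlet {V : Type*} [Fintype V] (c : V → V → ℝ) (f : V → ℝ) : ℝ :=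
  (1 / 2) * ∑ u : V, ∑ v : V, c u v * (f u - f v) ^ 2

/-- Effective conductance between the disjoint vertex sets `A` and `B`. -/
noncomputable def effCond {V : Type*} [Fintype V] (c : V → V → ℝ) (A B : Set V) : ℝ :=
  sInf (dirichlet c '' {f | (∀ a ∈ A, f a = 1) ∧ (∀ b ∈ B, f b = 0)})

/-- Effective resistance between `A` and `B`, valued in `ℝ≥0∞` (infinite when the
effective conductance vanishes). -/
noncomputable def effResE {V : Type*} [Fintype V] (c : V → V → ℝ) (A B : Set V) : ℝ≥0∞ :=
  (ENNReal.ofReal (effCond c A B))⁻¹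

open Classical in
/-- Conductances of the Schreier graph of the action on level `n` with (multi-)edges
given by a generating set: `c u v = #{s ∈ gens : u·s = v}` for `u ≠ v`. -/
noncomputable def schreierCond (gens : Set (AutT m)) (n : ℕ) :
    Vertex m n → Vertex m n → ℝ :=
  fun u v => if u = v then 0 else (Set.ncard {s | s ∈ gens ∧ app s u = v} : ℝ)

open Classical in
/-- Conductances of the Schreier graph of the action on level `n`, with weights
`κ s` on the edge corresponding to the generator `s`. -/
noncomputable def schreierCondWt (S : Finset (AutT m)) (κ : AutT m → ℝ) (n : ℕ) :
    Vertex m n → Vertex m n → ℝ :=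
  fun u v => if u = v then 0 else ∑ s ∈ S.filter (fun s => app s u = v), κ s

/-- The set `𝔸_n` of level-`n` vertices where some generator `s ∈ S` has a
non-trivial section lying in `𝒜_n`. -/
def ASet (hm : ∀ i, 0 < m i) (A : Subgroup (AutT m)) (S : Finset (AutT m)) (n : ℕ) :
    Set (Vertex m n) :=
  {w | ∃ s ∈ S, sectionAut s w ∈ Asub hm A n ∧ sectionAut s w ≠ 1}

/-- The set `𝔹_n` of level-`n` vertices where some generator `s ∈ S` has a
non-trivial section lying in `ℬ_n`. -/
def BSet (hm : ∀ i, 0 < m i) (A : Subgroup (AutT m)) (S : Finset (AutT m)) (n : ℕ) :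
    Set (Vertex m n) :=
  {w | ∃ s ∈ S, sectionAut s w ∈ Bsub hm A n ∧ sectionAut s w ≠ 1}

/-- The orbit of a level-`n` vertex under a subgroup `G ≤ Aut(T_m)`. -/
def orbitOf (G : Subgroup (AutT m)) {n : ℕ} (v : Vertex m n) : Set (Vertex m n) :=
  {u | ∃ g : AutT m, g ∈ G ∧ app g v = u}

/-! ### Regular trees and automata -/

/-- The constant valency sequence (regular rooted tree `T_mm`). -/
abbrev constSeq (mm : ℕ) : ℕ → ℕ := fun _ => mm


/-- An invertible automaton over the alphabet of a regular tree: a finite set of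
automorphisms closed under taking sections at one-letter words. -/
def IsAutomaton {mm : ℕ} (A : Finset (AutT (constSeq mm))) : Prop :=
  ∀ a ∈ A, ∀ x : Vertex (constSeq mm) 1, sectionAut a x ∈ A

/-- Bounded activity: for every state `a`, the number of level-`n` words with
non-trivial section is bounded uniformly in `n`. -/
def IsBoundedActivity {mm : ℕ} (A : Finset (AutT (constSeq mm))) : Prop :=
  ∀ a ∈ A, ∃ B : ℕ, ∀ n : ℕ,
    Set.ncard {w : Vertex (constSeq mm) n | sectionAut a w ≠ 1} ≤ B

/-- Word length with respect to a finite symmetric generating set. -/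
noncomputable def wordLen {G : Type*} [Group G] (S : Set G) (g : G) : ℕ :=
  sInf {k | ∃ l : List G, l.length = k ∧ (∀ s ∈ l, s ∈ S) ∧ l.prod = g}


/-! ### Auxiliary material for Statement 7 -/

/-- The per-letter weight used in the test potential. -/
noncomputable def sVal (m : ℕ → ℕ) (i : ℕ) (y : ℕ) : ℝ :=
  if y = 0 then 1 - (m i : ℝ)⁻¹ else -(m i : ℝ)⁻¹

/-- The test potential on level-`N` vertices. -/
noncomputable def Fpot : (N : ℕ) → Vertex m N → ℝ
  | 0, _ => 1
  | (N + 1), w => (m N : ℝ)⁻¹ + sVal m N ((w (Fin.last N) : ℕ)) * Fpot N (restr w)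

theorem Fpot_succ {N : ℕ} (w : Vertex m (N + 1)) :
    Fpot (N + 1) w
      = (m N : ℝ)⁻¹ + sVal m N ((w (Fin.last N) : ℕ)) * Fpot N (restr w) := rfl

theorem restr_eq_restrLe {N : ℕ} (w : Vertex m (N + 1)) :
    restr w = restrLe (Nat.le_add_right N 1) w := rfl

theorem restr_rayV (hm : ∀ i, 0 < m i) (N : ℕ) :
    restr (rayV hm (N + 1)) = rayV hm N := rfl

theorem Fpot_ray (hm : ∀ i, 0 < m i) : ∀ N, Fpot N (rayV hm N) = 1 := by
  intro N
  induction N with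
  | zero => rfl
  | succ N ih =>
    rw [Fpot_succ, restr_rayV, ih]
    have h2 : ((rayV hm (N + 1) (Fin.last N)) : ℕ) = 0 := rfl
    rw [h2, show sVal m N 0 = 1 - (m N : ℝ)⁻¹ from if_pos rfl]
    ring

theorem eq_rayV_of (hm : ∀ i, 0 < m i) {N : ℕ} (w : Vertex m (N + 1))
    (h1 : restr w = rayV hm N) (h2 : ((w (Fin.last N)) : ℕ) = 0) :
    w = rayV hm (N + 1) := by
  funext i
  apply Fin.ext
  rcases Nat.lt_or_ge (i : ℕ) N with h | h
  · have hi : i = Fin.castSucc ⟨(i : ℕ), h⟩ := Fin.ext rfl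
    rw [hi]
    show ((restr w ⟨(i : ℕ), h⟩ : Fin _) : ℕ) = _
    rw [h1]
    rfl
  · have hi : i = Fin.last N := Fin.ext (by rw [Fin.val_last]; omega)
    rw [hi]
    exact h2

theorem Fpot_nbr_zero (hm : ∀ i, 0 < m i) :
    ∀ {N : ℕ} (v : Vertex m N), IsNbr v → Fpot N v = 0 := by
  intro N v hv
  obtain ⟨hn, hne, hzero⟩ := hv
  match N, v, hn, hne, hzero with
  | (K + 1), v, hn, hne, hzero =>
    rw [Fpot_succ]
    have h1 : restr v = rayV hm K := by
      funext i
      apply Fin.ext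
      exact hzero (Fin.castSucc i) (by simp only [Fin.coe_castSucc]; omega)
    have h2 : ((v (Fin.last K)) : ℕ) ≠ 0 := hne
    rw [h1, Fpot_ray hm, show sVal m K ((v (Fin.last K)) : ℕ) = -(m K : ℝ)⁻¹ from if_neg h2]
    ring

theorem Fpot_nbrV (hm : ∀ i, 0 < m i) {n : ℕ} (x : Fin (m n)) (hx : (x : ℕ) ≠ 0) :
    Fpot (n + 1) (nbrV hm x) = 0 := by
  apply Fpot_nbr_zero hm
  refine ⟨Nat.succ_pos n, ?_, ?_⟩
  · have hidx : (((⟨n + 1 - 1, by omega⟩ : Fin (n + 1))) : ℕ) = n := rfl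
    show ((nbrV hm x ⟨n + 1 - 1, by omega⟩ : Fin _) : ℕ) ≠ 0
    unfold nbrV
    rw [dif_pos hidx]
    simpa using hx
  · intro i hi
    have hne : (i : ℕ) ≠ n := by omega
    show ((nbrV hm x i : Fin _) : ℕ) = 0
    unfold nbrV
    rw [dif_neg hne]

/-- Decomposition of the action at the top level when the section is trivial. -/
theorem decomp {N : ℕ} (g : AutT m) (w : Vertex m (N + 1))
    (hsec : sectionAut g (restrLe (Nat.le_add_right N 1) w) = 1) :
    g.val (N + 1) w
      = vappend (topPart w) (g.val N (restrLe (Nat.le_add_right N 1) w)) := by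
  have h1 : secFun g (restrLe (Nat.le_add_right N 1) w) 1 (topPart w) = topPart w := by
    have h3 := congrArg
      (fun h : AutT (shift m N) => (h.val 1) (topPart w)) hsec
    simpa [sectionAut, sectionEquiv] using h3
  conv_lhs => rw [← vappend_topPart w]
  rw [secFun_spec g (restrLe (Nat.le_add_right N 1) w) 1 (topPart w), h1]

theorem vappend_last_val {N : ℕ} (y : Vertex (shift m N) 1) (bot : Vertex m N) :
    ((vappend y bot (Fin.last N) : Fin _) : ℕ) = ((y ⟨0, Nat.zero_lt_one⟩ : Fin _) : ℕ) := by
  simp only [vappend]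
  rw [dif_neg (by simp)]
  simp only [Fin.coe_cast]
  exact congrArg (fun t : Fin 1 => ((y t : Fin _) : ℕ)) (Fin.ext (by simp))

theorem restr_vappend_one {N : ℕ} (y : Vertex (shift m N) 1) (bot : Vertex m N) :
    restr (vappend y bot) = bot := by
  rw [restr_eq_restrLe]
  exact restrLe_vappend y bot

theorem Fpot_vappend {N : ℕ} (y : Vertex (shift m N) 1) (bot : Vertex m N) :
    Fpot (N + 1) (vappend y bot)
      = (m N : ℝ)⁻¹ + sVal m N ((y ⟨0, Nat.zero_lt_one⟩ : ℕ)) * Fpot N bot := by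
  rw [Fpot_succ, vappend_last_val, restr_vappend_one]

/-- Invariance of the potential under directed automorphisms. -/
theorem Fpot_dir_inv (hm : ∀ i, 0 < m i) (a : AutT m) (ha : IsDirectedAut a) :
    ∀ (N : ℕ) (w : Vertex m N), Fpot N (a.val N w) = Fpot N w := by
  intro N
  induction N with
  | zero => intro w; rfl
  | succ N ih =>
    intro w
    have hrestr : restr (a.val (N + 1) w) = a.val N (restr w) :=
      restrLe_app a (Nat.le_add_right N 1) w
    by_cases h1 : OnRay (restr w)
    · have hray : restr w = rayV hm N := funext fun i => Fin.ext (h1 i)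
      by_cases h2 : ((w (Fin.last N)) : ℕ) = 0
      · have hw : a.val (N + 1) w = w := by
          have hwr : w = rayV hm (N + 1) := eq_rayV_of hm w hray h2
          rw [hwr]
          exact ha.1 (N + 1) _ (fun i => rfl)
        rw [hw]
      · have hres2 : restr (a.val (N + 1) w) = rayV hm N := by
          rw [hrestr, hray]
          rw [ha.1 N _ (fun i => rfl)]
        have htop : ((a.val (N + 1) w) (Fin.last N) : ℕ) ≠ 0 := by
          intro h0
          have h4 : a.val (N + 1) w = rayV hm (N + 1) := eq_rayV_of hm _ hres2 h0
          have h5 : a.val (N + 1) (rayV hm (N + 1)) = rayV hm (N + 1) :=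
            ha.1 (N + 1) _ (fun i => rfl)
          have h6 : w = rayV hm (N + 1) := (a.val (N + 1)).injective (h4.trans h5.symm)
          exact h2 (by rw [h6]; rfl)
        have hFw : Fpot (N + 1) w = 0 := by
          rw [Fpot_succ, hray, Fpot_ray hm,
            show sVal m N ((w (Fin.last N)) : ℕ) = -(m N : ℝ)⁻¹ from if_neg h2]
          ring
        have hFaw : Fpot (N + 1) (a.val (N + 1) w) = 0 := by
          rw [Fpot_succ, hres2, Fpot_ray hm,
            show sVal m N ((a.val (N + 1) w (Fin.last N)) : ℕ) = -(m N : ℝ)⁻¹ from if_neg htop]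
          ring
        rw [hFw, hFaw]
    · by_cases h3 : IsNbr (restr w)
      · have hFr : Fpot N (restr w) = 0 := Fpot_nbr_zero hm _ h3
        rw [Fpot_succ, Fpot_succ, hrestr, ih (restr w), hFr]
        ring
      · have hsec : sectionAut a (restrLe (Nat.le_add_right N 1) w) = 1 :=
          ha.2.1 N (restr w) h1 h3
        have hdec := decomp a w hsec
        have htopeq : ((a.val (N + 1) w) (Fin.last N) : ℕ) = ((w (Fin.last N)) : ℕ) := by
          rw [hdec, vappend_last_val]
          rfl
        rw [Fpot_succ, Fpot_succ, hrestr, ih (restr w), htopeq]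

/-- Splitting a level-`(N+1)` vertex into its bottom part and its top letter. -/
def splitEquiv (N : ℕ) : (Vertex m N × Vertex (shift m N) 1) ≃ Vertex m (N + 1) where
  toFun p := vappend p.2 p.1
  invFun w := (restrLe (Nat.le_add_right N 1) w, topPart w)
  left_inv p := Prod.ext (restrLe_vappend p.2 p.1) (topPart_vappend p.2 p.1)
  right_inv w := vappend_topPart w

theorem sum_split {N : ℕ} (g : Vertex m (N + 1) → ℝ) :
    ∑ w : Vertex m (N + 1), g w
      = ∑ bot : Vertex m N, ∑ y : Vertex (shift m N) 1, g (vappend y bot) := by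
  rw [← Equiv.sum_comp (splitEquiv N) g, Fintype.sum_prod_type]
  rfl

def fiberEquiv (N : ℕ) : Vertex (shift m N) 1 ≃ Fin (m N) where
  toFun y := ⟨((y ⟨0, Nat.zero_lt_one⟩ : Fin _) : ℕ), (y ⟨0, Nat.zero_lt_one⟩).isLt⟩
  invFun c := fun i =>
    ⟨c.1, lt_of_lt_of_le c.2 (Nat.le_of_eq (congrArg m (by have := i.2; omega)))⟩
  left_inv y := by
    funext i
    have h : i = ⟨0, Nat.zero_lt_one⟩ := Subsingleton.elim _ _
    subst h
    rfl
  right_inv c := rfl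

theorem sum_sVal_sq (hm : ∀ i, 0 < m i) (N : ℕ) :
    ∑ y : Vertex (shift m N) 1, (sVal m N ((y ⟨0, Nat.zero_lt_one⟩ : ℕ)))^2
      = ((m N : ℝ) - 1) / (m N) := by
  haveI : NeZero (m N) := ⟨(hm N).ne'⟩
  rw [← Equiv.sum_comp (fiberEquiv N).symm
    (fun y : Vertex (shift m N) 1 => (sVal m N ((y ⟨0, Nat.zero_lt_one⟩ : ℕ)))^2)]
  have hval : ∀ c : Fin (m N),
      ((((fiberEquiv N).symm c) ⟨0, Nat.zero_lt_one⟩ : Fin _) : ℕ) = (c : ℕ) := fun c => rfl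
  simp only [hval]
  rw [← Finset.add_sum_erase Finset.univ _ (Finset.mem_univ (0 : Fin (m N)))]
  have h0 : (sVal m N ((0 : Fin (m N)) : ℕ))^2 = (1 - (m N : ℝ)⁻¹)^2 := by
    rw [Fin.val_zero, show sVal m N 0 = 1 - (m N : ℝ)⁻¹ from if_pos rfl]
  have hrest : ∑ c ∈ Finset.univ.erase (0 : Fin (m N)), (sVal m N (c : ℕ))^2
      = ((m N : ℕ) - 1 : ℕ) * ((m N : ℝ)⁻¹)^2 := by
    rw [Finset.sum_congr rfl (fun c hc => ?_)]
    · rw [Finset.sum_const, Finset.card_erase_of_mem (Finset.mem_univ _), Finset.card_univ,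
        Fintype.card_fin, nsmul_eq_mul]
    · have hc0 : (c : ℕ) ≠ 0 := fun h =>
        Finset.ne_of_mem_erase hc (Fin.ext (by rw [h, Fin.val_zero]))
      rw [show sVal m N (c : ℕ) = -(m N : ℝ)⁻¹ from if_neg hc0]
      ring
  rw [h0, hrest]
  have hcast : (((m N : ℕ) - 1 : ℕ) : ℝ) = (m N : ℝ) - 1 := by
    have := hm N
    push_cast [Nat.cast_sub (by omega : 1 ≤ m N)]
    ring
  rw [hcast]
  have hne : (m N : ℝ) ≠ 0 := by
    have := hm N
    positivity
  field_simp
  ring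

/-- Energy bound for a rooted generator. -/
theorem rooted_energy (hm : ∀ i, 0 < m i) (b : AutT m) (hb : IsRooted b) :
    ∀ n : ℕ, ∑ w : Vertex m (n + 1), (Fpot (n + 1) w - Fpot (n + 1) (b.val (n + 1) w))^2
      ≤ (m 0 : ℝ) * ∏ i ∈ Finset.Ico 1 (n + 1), ((m i : ℝ) - 1) / (m i) := by
  intro n
  induction n with
  | zero =>
    simp only [Finset.Ico_self, Finset.prod_empty, mul_one]
    have hcases : ∀ v : Vertex m (0 + 1), Fpot (0 + 1) v = 0 ∨ Fpot (0 + 1) v = 1 := by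
      intro v
      show (m 0 : ℝ)⁻¹ + sVal m 0 ((v (Fin.last 0) : ℕ)) * Fpot 0 (restr v) = 0 ∨ _
      by_cases h : ((v (Fin.last 0)) : ℕ) = 0
      · right
        show (m 0 : ℝ)⁻¹ + sVal m 0 ((v (Fin.last 0) : ℕ)) * Fpot 0 (restr v) = 1
        rw [h, show sVal m 0 0 = 1 - (m 0 : ℝ)⁻¹ from if_pos rfl]
        show (m 0 : ℝ)⁻¹ + (1 - (m 0 : ℝ)⁻¹) * 1 = 1
        ring
      · left
        rw [show sVal m 0 ((v (Fin.last 0) : ℕ)) = -(m 0 : ℝ)⁻¹ from if_neg h]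
        show (m 0 : ℝ)⁻¹ + -(m 0 : ℝ)⁻¹ * 1 = 0
        ring
    have hterm : ∀ w : Vertex m (0 + 1),
        (Fpot (0 + 1) w - Fpot (0 + 1) (b.val (0 + 1) w))^2 ≤ 1 := by
      intro w
      rcases hcases w with h | h <;> rcases hcases (b.val (0 + 1) w) with h' | h' <;>
        rw [h, h'] <;> norm_num
    refine le_trans (Finset.sum_le_sum (fun w _ => hterm w)) ?_
    rw [Finset.sum_const, Finset.card_univ, nsmul_eq_mul, mul_one]
    have hcard : Fintype.card (Vertex m (0 + 1)) = m 0 := by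
      rw [Fintype.card_pi]
      simp
    rw [hcard]
  | succ n ih =>
    rw [sum_split]
    have hstep : ∀ (bot : Vertex m (n + 1)) (y : Vertex (shift m (n + 1)) 1),
        (Fpot ((n + 1) + 1) (vappend y bot)
          - Fpot ((n + 1) + 1) (b.val ((n + 1) + 1) (vappend y bot)))^2
        = (sVal m (n + 1) ((y ⟨0, Nat.zero_lt_one⟩ : ℕ)))^2
            * (Fpot (n + 1) bot - Fpot (n + 1) (b.val (n + 1) bot))^2 := by
      intro bot y
      have hsec : sectionAut b (restrLe (Nat.le_add_right (n + 1) 1) (vappend y bot)) = 1 := by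
        rw [restrLe_vappend]
        exact hb (n + 1) bot (Nat.succ_pos n)
      have hb1 : b.val ((n + 1) + 1) (vappend y bot) = vappend y (b.val (n + 1) bot) := by
        have hd := decomp b (vappend y bot) hsec
        rw [restrLe_vappend, topPart_vappend] at hd
        exact hd
      rw [hb1, Fpot_vappend, Fpot_vappend]
      ring
    calc ∑ bot : Vertex m (n + 1), ∑ y : Vertex (shift m (n + 1)) 1,
          (Fpot ((n + 1) + 1) (vappend y bot)
            - Fpot ((n + 1) + 1) (b.val ((n + 1) + 1) (vappend y bot)))^2
        = ∑ bot : Vertex m (n + 1),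
            (((m (n + 1) : ℝ) - 1) / (m (n + 1)))
              * (Fpot (n + 1) bot - Fpot (n + 1) (b.val (n + 1) bot))^2 := by
          refine Finset.sum_congr rfl fun bot _ => ?_
          rw [Finset.sum_congr rfl (fun y _ => hstep bot y), ← Finset.sum_mul,
            sum_sVal_sq hm (n + 1)]
      _ = (((m (n + 1) : ℝ) - 1) / (m (n + 1)))
            * ∑ bot : Vertex m (n + 1),
                (Fpot (n + 1) bot - Fpot (n + 1) (b.val (n + 1) bot))^2 := by
          rw [Finset.mul_sum]
      _ ≤ (((m (n + 1) : ℝ) - 1) / (m (n + 1)))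
            * ((m 0 : ℝ) * ∏ i ∈ Finset.Ico 1 (n + 1), ((m i : ℝ) - 1) / (m i)) := by
          refine mul_le_mul_of_nonneg_left ih ?_
          have h1 : (1 : ℝ) ≤ (m (n + 1) : ℝ) := by exact_mod_cast hm (n + 1)
          exact div_nonneg (by linarith) (by linarith)
      _ = (m 0 : ℝ) * ∏ i ∈ Finset.Ico 1 ((n + 1) + 1), ((m i : ℝ) - 1) / (m i) := by
          rw [Finset.prod_Ico_succ_top (by omega : 1 ≤ n + 1)]
          ring

theorem schreierCond_nonneg (gens : Set (AutT m)) (n : ℕ) (u v : Vertex m n) :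
    0 ≤ schreierCond gens n u v := by
  unfold schreierCond
  split
  · rfl
  · positivity

theorem dirichlet_nonneg {V : Type*} [Fintype V] (c : V → V → ℝ)
    (hc : ∀ u v, 0 ≤ c u v) (f : V → ℝ) : 0 ≤ dirichlet c f := by
  unfold dirichlet
  refine mul_nonneg (by norm_num) ?_
  refine Finset.sum_nonneg fun u _ => ?_
  exact Finset.sum_nonneg fun v _ => mul_nonneg (hc u v) (sq_nonneg _)

/-- In the Schreier graphs `𝒢_n` of `M(𝒜,ℬ)` acting on the levels
of the tree with generating set `𝒜 ∪ ℬ`, the effective resistance between the root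
`0⋯0` and any anti-root `x0⋯0` (`x ≠ 0`) is at least `c·∏_{i=1}^n m_i/(m_i-1)`,
which in turn is at least `c·(m_*/(m_*-1))^n`. -/
theorem resistance_root_antiroot_lower_bound
    (m : ℕ → ℕ) (hm : ∀ i, 0 < m i) (hm2 : ∀ i, 2 ≤ m i)
    (mstar : ℕ) (hub : ∀ i, m i ≤ mstar) (hatt : ∃ i, m i = mstar)
    (A B : Subgroup (AutT m))
    (hAfin : (A : Set (AutT m)).Finite) (hAdir : ∀ a ∈ A, IsDirectedAut a)
    (hBfin : (B : Set (AutT m)).Finite) (hBrooted : ∀ b ∈ B, IsRooted b) :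
    ∃ c : ℝ, 0 < c ∧ ∀ n : ℕ, ∀ x : Fin (m n), (x : ℕ) ≠ 0 →
      ENNReal.ofReal (c * ∏ i ∈ Finset.range (n + 1), ((m i : ℝ) / ((m i : ℝ) - 1)))
          ≤ effResE
              (schreierCond ((A : Set (AutT m)) ∪ (B : Set (AutT m))) (n + 1))
              {rayV hm (n + 1)} {nbrV hm x}
        ∧ c * ((mstar : ℝ) / ((mstar : ℝ) - 1)) ^ (n + 1)
            ≤ c * ∏ i ∈ Finset.range (n + 1), ((m i : ℝ) / ((m i : ℝ) - 1)) := by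
  classical
  have hfacts : ∀ i : ℕ, (2 : ℝ) ≤ (m i : ℝ) := fun i => by exact_mod_cast hm2 i
  have hmsR : (2 : ℝ) ≤ (mstar : ℝ) := by
    have h : 2 ≤ mstar := le_trans (hm2 0) (hub 0)
    exact_mod_cast h
  set S : Finset (AutT m) := hAfin.toFinset ∪ hBfin.toFinset with hS
  have h1S : (1 : AutT m) ∈ S := by
    rw [hS]
    exact Finset.mem_union_left _ ((Set.Finite.mem_toFinset hAfin).mpr (one_mem A))
  have hScard : 0 < (S.card : ℝ) := by
    have h : 0 < S.card := Finset.card_pos.mpr ⟨1, h1S⟩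
    exact_mod_cast h
  set Kc : ℝ := (S.card : ℝ) * (mstar : ℝ) ^ 2 with hKc
  have hKpos : 0 < Kc := by
    have h2 : (0 : ℝ) < (mstar : ℝ) ^ 2 := by nlinarith
    exact mul_pos hScard h2
  refine ⟨Kc⁻¹, inv_pos.mpr hKpos, ?_⟩
  intro n x hx
  set Q : ℝ := ∏ i ∈ Finset.range (n + 1), ((m i : ℝ) - 1) / (m i) with hQ
  have hQpos : 0 < Q := Finset.prod_pos fun i _ =>
    div_pos (by have := hfacts i; linarith) (by have := hfacts i; linarith)
  have hPQ : (∏ i ∈ Finset.range (n + 1), (m i : ℝ) / ((m i : ℝ) - 1)) = Q⁻¹ := by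
    rw [hQ, ← Finset.prod_inv_distrib]
    exact Finset.prod_congr rfl fun i _ => (inv_div _ _).symm
  have key : ∀ u : Vertex m (n + 1),
      ∑ v : Vertex m (n + 1),
          schreierCond ((A : Set (AutT m)) ∪ (B : Set (AutT m))) (n + 1) u v
            * (Fpot (n + 1) u - Fpot (n + 1) v) ^ 2
        = ∑ s ∈ S, (Fpot (n + 1) u - Fpot (n + 1) (app s u)) ^ 2 := by
    intro u
    have hset : ∀ v : Vertex m (n + 1),
        {s : AutT m | s ∈ (A : Set (AutT m)) ∪ (B : Set (AutT m)) ∧ app s u = v}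
          = ↑(S.filter fun s => app s u = v) := by
      intro v
      ext s
      simp only [Set.mem_setOf_eq, Finset.coe_filter, Finset.mem_coe, Finset.mem_filter, hS,
        Finset.mem_union, Set.Finite.mem_toFinset, Set.mem_union]
    calc ∑ v : Vertex m (n + 1),
          schreierCond ((A : Set (AutT m)) ∪ (B : Set (AutT m))) (n + 1) u v
            * (Fpot (n + 1) u - Fpot (n + 1) v) ^ 2
        = ∑ v : Vertex m (n + 1), ((S.filter fun s => app s u = v).card : ℝ)
            * (Fpot (n + 1) u - Fpot (n + 1) v) ^ 2 := by
          refine Finset.sum_congr rfl fun v _ => ?_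
          by_cases hv : u = v
          · subst hv
            simp [schreierCond]
          · simp only [schreierCond]
            rw [if_neg hv, hset v, Set.ncard_coe_finset]
      _ = ∑ v : Vertex m (n + 1), ∑ s ∈ S.filter (fun s => app s u = v),
            (Fpot (n + 1) u - Fpot (n + 1) v) ^ 2 := by
          refine Finset.sum_congr rfl fun v _ => ?_
          rw [Finset.sum_const, nsmul_eq_mul]
      _ = ∑ v : Vertex m (n + 1), ∑ s ∈ S.filter (fun s => app s u = v),
            (Fpot (n + 1) u - Fpot (n + 1) (app s u)) ^ 2 := by
          refine Finset.sum_congr rfl fun v _ => Finset.sum_congr rfl fun s hs => ?_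
          rw [(Finset.mem_filter.mp hs).2]
      _ = ∑ v : Vertex m (n + 1), ∑ s ∈ S,
            if app s u = v then (Fpot (n + 1) u - Fpot (n + 1) (app s u)) ^ 2 else 0 := by
          refine Finset.sum_congr rfl fun v _ => ?_
          rw [Finset.sum_filter]
      _ = ∑ s ∈ S, ∑ v : Vertex m (n + 1),
            if app s u = v then (Fpot (n + 1) u - Fpot (n + 1) (app s u)) ^ 2 else 0 :=
          Finset.sum_comm
      _ = ∑ s ∈ S, (Fpot (n + 1) u - Fpot (n + 1) (app s u)) ^ 2 := by
          refine Finset.sum_congr rfl fun s _ => ?_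
          simp
  have hQsplit : Q = ((m 0 : ℝ) - 1) / (m 0)
      * ∏ i ∈ Finset.Ico 1 (n + 1), ((m i : ℝ) - 1) / (m i) := by
    rw [hQ, Finset.range_eq_Ico, Finset.prod_eq_prod_Ico_succ_bot (by omega)]
  have hgen : ∀ s ∈ S, ∑ u : Vertex m (n + 1),
      (Fpot (n + 1) u - Fpot (n + 1) (app s u)) ^ 2 ≤ (mstar : ℝ) ^ 2 * Q := by
    intro s hs
    have hMQ : 0 ≤ (mstar : ℝ) ^ 2 * Q := mul_nonneg (sq_nonneg _) hQpos.le
    rcases Finset.mem_union.mp (hS ▸ hs) with hsa | hsb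
    · have hsa' : s ∈ A := (Set.Finite.mem_toFinset hAfin).mp hsa
      have hzero : ∀ u : Vertex m (n + 1),
          (Fpot (n + 1) u - Fpot (n + 1) (app s u)) ^ 2 = 0 := by
        intro u
        rw [show app s u = s.val (n + 1) u from rfl,
          Fpot_dir_inv hm s (hAdir s hsa') (n + 1) u]
        ring
      rw [Finset.sum_congr rfl fun u _ => hzero u, Finset.sum_const, smul_zero]
      exact hMQ
    · have hsb' : s ∈ B := (Set.Finite.mem_toFinset hBfin).mp hsb
      refine le_trans (rooted_energy hm s (hBrooted s hsb') n) ?_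
      rw [hQsplit]
      have hIco : 0 ≤ ∏ i ∈ Finset.Ico 1 (n + 1), ((m i : ℝ) - 1) / (m i) :=
        Finset.prod_nonneg fun i _ =>
          div_nonneg (by have := hfacts i; linarith) (by have := hfacts i; linarith)
      have h0pos : (0 : ℝ) < (m 0 : ℝ) := by have := hfacts 0; linarith
      have hcoef : (m 0 : ℝ) ≤ (mstar : ℝ) ^ 2 * (((m 0 : ℝ) - 1) / (m 0)) := by
        rw [← mul_div_assoc, le_div_iff₀ h0pos]
        have hub0 : (m 0 : ℝ) ≤ (mstar : ℝ) := by exact_mod_cast hub 0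
        nlinarith [hfacts 0]
      exact le_trans (mul_le_mul_of_nonneg_right hcoef hIco) (le_of_eq (by ring))
  have energy : dirichlet
      (schreierCond ((A : Set (AutT m)) ∪ (B : Set (AutT m))) (n + 1)) (Fpot (n + 1))
      ≤ Kc * Q := by
    unfold dirichlet
    rw [Finset.sum_congr rfl fun u (_ : u ∈ Finset.univ) => key u, Finset.sum_comm]
    have e3 : ∑ s ∈ S, ∑ u : Vertex m (n + 1),
        (Fpot (n + 1) u - Fpot (n + 1) (app s u)) ^ 2
        ≤ (S.card : ℝ) * ((mstar : ℝ) ^ 2 * Q) := by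
      refine le_trans (Finset.sum_le_sum hgen) ?_
      rw [Finset.sum_const, nsmul_eq_mul]
    have hT : 0 ≤ (S.card : ℝ) * ((mstar : ℝ) ^ 2 * Q) :=
      mul_nonneg hScard.le (mul_nonneg (sq_nonneg _) hQpos.le)
    have hKQ : Kc * Q = (S.card : ℝ) * ((mstar : ℝ) ^ 2 * Q) := by rw [hKc]; ring
    rw [hKQ]
    nlinarith [e3, hT]
  have heff : effCond
      (schreierCond ((A : Set (AutT m)) ∪ (B : Set (AutT m))) (n + 1))
      {rayV hm (n + 1)} {nbrV hm x} ≤ Kc * Q := by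
    unfold effCond
    refine le_trans (csInf_le ⟨0, ?_⟩ ?_) energy
    · rintro z ⟨f, -, rfl⟩
      exact dirichlet_nonneg _ (schreierCond_nonneg _ _) f
    · exact ⟨Fpot (n + 1),
        ⟨fun a ha => by rw [Set.mem_singleton_iff] at ha; rw [ha]; exact Fpot_ray hm (n + 1),
         fun v hv => by rw [Set.mem_singleton_iff] at hv; rw [hv]; exact Fpot_nbrV hm x hx⟩,
        rfl⟩
  constructor
  · unfold effResE
    have hKQpos : 0 < Kc * Q := mul_pos hKpos hQpos
    have hEq : Kc⁻¹ * (∏ i ∈ Finset.range (n + 1), (m i : ℝ) / ((m i : ℝ) - 1))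
        = (Kc * Q)⁻¹ := by
      rw [hPQ, ← mul_inv]
    rw [hEq, ENNReal.ofReal_inv_of_pos hKQpos]
    exact ENNReal.inv_le_inv.mpr (ENNReal.ofReal_le_ofReal heff)
  · refine mul_le_mul_of_nonneg_left ?_ (inv_nonneg.mpr hKpos.le)
    calc ((mstar : ℝ) / ((mstar : ℝ) - 1)) ^ (n + 1)
        = ∏ _i ∈ Finset.range (n + 1), ((mstar : ℝ) / ((mstar : ℝ) - 1)) := by
          rw [Finset.prod_const, Finset.card_range]
      _ ≤ ∏ i ∈ Finset.range (n + 1), (m i : ℝ) / ((m i : ℝ) - 1) := by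
          refine Finset.prod_le_prod (fun i _ => ?_) (fun i _ => ?_)
          · exact div_nonneg (by linarith) (by linarith)
          · rw [div_le_div_iff₀ (by linarith) (by have := hfacts i; linarith)]
            have hubi : (m i : ℝ) ≤ (mstar : ℝ) := by exact_mod_cast hub i
            nlinarith [hfacts i]


end Paper
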